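/- Let n_1(2,2) be the 6-dimensional 2-step nilpotent real Lie algebra with basis (e_1,…,e_6) and nonvanishing brackets [e_6,e_3]=e_2, [e_6,e_5]=e_4, [e_3,e_5]=e_1. Then: (1) with h = span(e_1, e_2, e_4, e_3+e_6), θ_1 = e_1*∧e_3* − e_1*∧e_5* − e_1*∧e_6* + e_3*∧e_4* + e_3*∧e_6* + e_4*∧e_6* and θ_2 = e_1*∧e_3* − e_1*∧e_5* − e_1*∧e_6* + 2e_2*∧e_5* − e_3*∧e_4* + e_3*∧e_6* − e_4*∧e_6*, the triple (h, θ_1, θ_2) is a 2-symplectic structure on n_1(2,2); and (2) with θ = e_1*∧e_3* − e_1*∧e_6* + e_2*∧e_5* + e_2*∧e_6* + e_4*∧e_5*, the pair (Z(n_1(2,2)) = span(e_1,e_2,e_4), θ) is a 1-symplectic structure on n_1(2,2), i.e. θ is a nondegenerate 2-cocycle and the center is a 3-dimensional Lie subalgebra isotropic for θ. -/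

import Mathlib

/-- The alternating bilinear form `eᵢ* ∧ eⱼ*` associated to a basis `b`:
`(u, v) ↦ eᵢ*(u) eⱼ*(v) − eⱼ*(u) eᵢ*(v)`. -/
noncomputable def wedge {L : Type*} [AddCommGroup L] [Module ℝ L]
    (b : Module.Basis (Fin 6) ℝ L) (i j : Fin 6) (u v : L) : ℝ :=
  b.repr u i * b.repr v j - b.repr u j * b.repr v i

/-- `θ₁ = e₁*∧e₃* − e₁*∧e₅* − e₁*∧e₆* + e₃*∧e₄* + e₃*∧e₆* + e₄*∧e₆*` (0-indexed). -/
noncomputable def nTheta1 {L : Type*} [AddCommGroup L] [Module ℝ L]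
    (b : Module.Basis (Fin 6) ℝ L) (u v : L) : ℝ :=
  wedge b 0 2 u v - wedge b 0 4 u v - wedge b 0 5 u v + wedge b 2 3 u v
    + wedge b 2 5 u v + wedge b 3 5 u v

/-- `θ₂ = e₁*∧e₃* − e₁*∧e₅* − e₁*∧e₆* + 2e₂*∧e₅* − e₃*∧e₄* + e₃*∧e₆* − e₄*∧e₆*`
(0-indexed). -/
noncomputable def nTheta2 {L : Type*} [AddCommGroup L] [Module ℝ L]
    (b : Module.Basis (Fin 6) ℝ L) (u v : L) : ℝ :=
  wedge b 0 2 u v - wedge b 0 4 u v - wedge b 0 5 u v + 2 * wedge b 1 4 u v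
    - wedge b 2 3 u v + wedge b 2 5 u v - wedge b 3 5 u v

/-- `θ = e₁*∧e₃* − e₁*∧e₆* + e₂*∧e₅* + e₂*∧e₆* + e₄*∧e₅*` (0-indexed). -/
noncomputable def nTheta {L : Type*} [AddCommGroup L] [Module ℝ L]
    (b : Module.Basis (Fin 6) ℝ L) (u v : L) : ℝ :=
  wedge b 0 2 u v - wedge b 0 5 u v + wedge b 1 4 u v + wedge b 1 5 u v
    + wedge b 3 4 u v

/-- The bracket of `n₁(2,2)` in coordinates. -/
lemma n1_22_brkt {L : Type*} [LieRing L] [LieAlgebra ℝ L] (b : Module.Basis (Fin 6) ℝ L)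
    (h63 : ⁅b 5, b 2⁆ = b 1) (h65 : ⁅b 5, b 4⁆ = b 3) (h35 : ⁅b 2, b 4⁆ = b 0)
    (h12 : ⁅b 0, b 1⁆ = 0) (h13 : ⁅b 0, b 2⁆ = 0) (h14 : ⁅b 0, b 3⁆ = 0)
    (h15 : ⁅b 0, b 4⁆ = 0) (h16 : ⁅b 0, b 5⁆ = 0)
    (h23 : ⁅b 1, b 2⁆ = 0) (h24 : ⁅b 1, b 3⁆ = 0) (h25 : ⁅b 1, b 4⁆ = 0)
    (h26 : ⁅b 1, b 5⁆ = 0)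
    (h34 : ⁅b 2, b 3⁆ = 0) (h45 : ⁅b 3, b 4⁆ = 0) (h46 : ⁅b 3, b 5⁆ = 0)
    (u v : L) :
    ⁅u, v⁆ = (b.repr u 2 * b.repr v 4 - b.repr u 4 * b.repr v 2) • b 0
      + (b.repr u 5 * b.repr v 2 - b.repr u 2 * b.repr v 5) • b 1
      + (b.repr u 5 * b.repr v 4 - b.repr u 4 * b.repr v 5) • b 3 := by
  have e10 : ⁅b 1, b 0⁆ = 0 := by rw [← lie_skew, h12, neg_zero]
  have e20 : ⁅b 2, b 0⁆ = 0 := by rw [← lie_skew, h13, neg_zero]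
  have e30 : ⁅b 3, b 0⁆ = 0 := by rw [← lie_skew, h14, neg_zero]
  have e40 : ⁅b 4, b 0⁆ = 0 := by rw [← lie_skew, h15, neg_zero]
  have e50 : ⁅b 5, b 0⁆ = 0 := by rw [← lie_skew, h16, neg_zero]
  have e21 : ⁅b 2, b 1⁆ = 0 := by rw [← lie_skew, h23, neg_zero]
  have e31 : ⁅b 3, b 1⁆ = 0 := by rw [← lie_skew, h24, neg_zero]
  have e41 : ⁅b 4, b 1⁆ = 0 := by rw [← lie_skew, h25, neg_zero]
  have e51 : ⁅b 5, b 1⁆ = 0 := by rw [← lie_skew, h26, neg_zero]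
  have e32 : ⁅b 3, b 2⁆ = 0 := by rw [← lie_skew, h34, neg_zero]
  have e43 : ⁅b 4, b 3⁆ = 0 := by rw [← lie_skew, h45, neg_zero]
  have e53 : ⁅b 5, b 3⁆ = 0 := by rw [← lie_skew, h46, neg_zero]
  have e25 : ⁅b 2, b 5⁆ = -b 1 := by rw [← lie_skew, h63]
  have e45 : ⁅b 4, b 5⁆ = -b 3 := by rw [← lie_skew, h65]
  have e42 : ⁅b 4, b 2⁆ = -b 0 := by rw [← lie_skew, h35]
  conv_lhs => rw [← b.sum_repr u, ← b.sum_repr v]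
  simp only [Fin.sum_univ_six, add_lie, lie_add, smul_lie, lie_smul, lie_self,
    h63, h65, h35, h12, h13, h14, h15, h16, h23, h24, h25, h26, h34, h45, h46,
    e10, e20, e30, e40, e50, e21, e31, e41, e51, e32, e43, e53, e25, e45, e42,
    smul_zero, zero_add, add_zero, smul_neg]
  module

set_option maxHeartbeats 4000000

/-- On the 2-step nilpotent Lie algebra `n₁(2,2)` (nonvanishing brackets
`[e₆,e₃]=e₂`, `[e₆,e₅]=e₄`, `[e₃,e₅]=e₁`):
(1) `(h = span(e₁,e₂,e₄,e₃+e₆), θ₁, θ₂)` is a 2-symplectic structure;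
(2) `(Z(n₁(2,2)) = span(e₁,e₂,e₄), θ)` is a 1-symplectic structure, i.e. `θ` is a
nondegenerate 2-cocycle and the center is a 3-dimensional subalgebra isotropic for `θ`. -/
theorem n1_22_symplectic_structures
    {L : Type*} [LieRing L] [LieAlgebra ℝ L]
    (b : Module.Basis (Fin 6) ℝ L)
    (h63 : ⁅b 5, b 2⁆ = b 1) (h65 : ⁅b 5, b 4⁆ = b 3) (h35 : ⁅b 2, b 4⁆ = b 0)
    (h12 : ⁅b 0, b 1⁆ = 0) (h13 : ⁅b 0, b 2⁆ = 0) (h14 : ⁅b 0, b 3⁆ = 0)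
    (h15 : ⁅b 0, b 4⁆ = 0) (h16 : ⁅b 0, b 5⁆ = 0)
    (h23 : ⁅b 1, b 2⁆ = 0) (h24 : ⁅b 1, b 3⁆ = 0) (h25 : ⁅b 1, b 4⁆ = 0)
    (h26 : ⁅b 1, b 5⁆ = 0)
    (h34 : ⁅b 2, b 3⁆ = 0) (h45 : ⁅b 3, b 4⁆ = 0) (h46 : ⁅b 3, b 5⁆ = 0) :
    -- (1) the 2-symplectic structure
    ((∃ H : LieSubalgebra ℝ L,
        H.toSubmodule = Submodule.span ℝ {b 0, b 1, b 3, b 2 + b 5} ∧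
        Module.finrank ℝ H = 4) ∧
      (∀ u : L, nTheta1 b u u = 0 ∧ nTheta2 b u u = 0) ∧
      (∀ u v w : L,
        nTheta1 b ⁅u, v⁆ w + nTheta1 b ⁅v, w⁆ u + nTheta1 b ⁅w, u⁆ v = 0) ∧
      (∀ u v w : L,
        nTheta2 b ⁅u, v⁆ w + nTheta2 b ⁅v, w⁆ u + nTheta2 b ⁅w, u⁆ v = 0) ∧
      (∀ u ∈ Submodule.span ℝ ({b 0, b 1, b 3, b 2 + b 5} : Set L),
        ∀ v ∈ Submodule.span ℝ ({b 0, b 1, b 3, b 2 + b 5} : Set L),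
          nTheta1 b u v = 0 ∧ nTheta2 b u v = 0) ∧
      (∀ u : L, (∀ v : L, nTheta1 b u v = 0) → (∀ v : L, nTheta2 b u v = 0) →
        u = 0)) ∧
    -- (2) the 1-symplectic structure on the center
    ((LieAlgebra.center ℝ L).toSubmodule =
        Submodule.span ℝ ({b 0, b 1, b 3} : Set L) ∧
      Module.finrank ℝ (LieAlgebra.center ℝ L).toSubmodule = 3 ∧
      (∀ u : L, nTheta b u u = 0) ∧
      (∀ u v w : L,
        nTheta b ⁅u, v⁆ w + nTheta b ⁅v, w⁆ u + nTheta b ⁅w, u⁆ v = 0) ∧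
      (∀ u : L, (∀ v : L, nTheta b u v = 0) → u = 0) ∧
      (∀ u ∈ LieAlgebra.center ℝ L, ∀ v ∈ LieAlgebra.center ℝ L,
        nTheta b u v = 0)) := by
  have B := n1_22_brkt b h63 h65 h35 h12 h13 h14 h15 h16 h23 h24 h25 h26 h34 h45 h46
  -- values of the forms on brackets
  have hcomb1 : ∀ (A C : ℝ) (Bc : ℝ) (x : L),
      nTheta1 b (A • b 0 + Bc • b 1 + C • b 3) x
        = A * (b.repr x 2 - b.repr x 4 - b.repr x 5) + C * (b.repr x 5 - b.repr x 2) := by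
    intro A C Bc x
    simp [nTheta1, wedge, Finsupp.single_apply]
    ring
  have hcomb2 : ∀ (A C : ℝ) (Bc : ℝ) (x : L),
      nTheta2 b (A • b 0 + Bc • b 1 + C • b 3) x
        = A * (b.repr x 2 - b.repr x 4 - b.repr x 5) + 2 * Bc * b.repr x 4
          + C * (b.repr x 2 - b.repr x 5) := by
    intro A C Bc x
    simp [nTheta2, wedge, Finsupp.single_apply]
    ring
  have hcomb : ∀ (A C : ℝ) (Bc : ℝ) (x : L),
      nTheta b (A • b 0 + Bc • b 1 + C • b 3) x
        = A * (b.repr x 2 - b.repr x 5) + Bc * (b.repr x 4 + b.repr x 5)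
          + C * b.repr x 4 := by
    intro A C Bc x
    simp [nTheta, wedge, Finsupp.single_apply]
    ring
  -- membership of the span h in coordinates
  have hmemS : ∀ x ∈ Submodule.span ℝ ({b 0, b 1, b 3, b 2 + b 5} : Set L),
      b.repr x 4 = 0 ∧ b.repr x 2 = b.repr x 5 := by
    have hle : Submodule.span ℝ ({b 0, b 1, b 3, b 2 + b 5} : Set L)
        ≤ LinearMap.ker (b.coord 4) ⊓ LinearMap.ker (b.coord 2 - b.coord 5) := by
      rw [Submodule.span_le]
      rintro z hz
      simp only [Set.mem_insert_iff, Set.mem_singleton_iff] at hz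
      rcases hz with rfl | rfl | rfl | rfl <;>
        simp [Submodule.mem_inf, LinearMap.mem_ker, LinearMap.sub_apply,
          Module.Basis.coord_apply, Finsupp.single_apply]
    intro x hx
    have hx' := hle hx
    rw [Submodule.mem_inf, LinearMap.mem_ker, LinearMap.mem_ker, LinearMap.sub_apply] at hx'
    simp only [Module.Basis.coord_apply] at hx'
    exact ⟨hx'.1, sub_eq_zero.mp hx'.2⟩
  -- coordinates of central elements
  have hcentral : ∀ z : L, z ∈ LieAlgebra.center ℝ L ↔
      (b.repr z 2 = 0 ∧ b.repr z 4 = 0 ∧ b.repr z 5 = 0) := by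
    intro z
    rw [LieModule.mem_maxTrivSubmodule]
    constructor
    · intro hz
      have k2 := congrArg (fun y => b.repr y 0) ((B (b 4) z).symm.trans (hz (b 4)))
      have k5 := congrArg (fun y => b.repr y 3) ((B (b 4) z).symm.trans (hz (b 4)))
      have k4 := congrArg (fun y => b.repr y 0) ((B (b 2) z).symm.trans (hz (b 2)))
      simp [Finsupp.single_apply] at k2 k5 k4
      exact ⟨k2, k4, k5⟩
    · rintro ⟨z2, z4, z5⟩ x
      rw [B x z, z2, z4, z5]
      simp
  -- the center as a submodule
  have hCenterEq : (LieAlgebra.center ℝ L).toSubmodule =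
      Submodule.span ℝ ({b 0, b 1, b 3} : Set L) := by
    apply le_antisymm
    · intro u hu
      rw [LieSubmodule.mem_toSubmodule, hcentral] at hu
      obtain ⟨u2, u4, u5⟩ := hu
      have hu' : u = b.repr u 0 • b 0 + b.repr u 1 • b 1 + b.repr u 3 • b 3 := by
        conv_lhs => rw [← b.sum_repr u]
        rw [Fin.sum_univ_six, u2, u4, u5]
        module
      rw [hu']
      refine add_mem (add_mem ?_ ?_) ?_ <;>
        exact Submodule.smul_mem _ _ (Submodule.subset_span (by simp))
    · rw [Submodule.span_le]
      rintro z hz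
      simp only [Set.mem_insert_iff, Set.mem_singleton_iff] at hz
      have : z ∈ LieAlgebra.center ℝ L := by
        rw [hcentral]
        rcases hz with rfl | rfl | rfl <;> simp [Finsupp.single_apply]
      exact this
  -- linear independence helpers
  have li3 : LinearIndependent ℝ ![b 0, b 1, b 3] := by
    have he : ![b 0, b 1, b 3] = b ∘ ![0, 1, 3] := by
      funext i; fin_cases i <;> rfl
    rw [he]
    exact b.linearIndependent.comp _ (by decide)
  have hset3 : ({b 0, b 1, b 3} : Set L) = Set.range ![b 0, b 1, b 3] := by
    ext x
    simp [Matrix.range_cons, Matrix.range_empty]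
    tauto
  have li4 : LinearIndependent ℝ ![b 0, b 1, b 3, b 2 + b 5] := by
    rw [Fintype.linearIndependent_iff]
    intro g hg
    rw [Fin.sum_univ_four] at hg
    simp only [Matrix.cons_val_zero, Matrix.cons_val_one, Matrix.head_cons,
      Matrix.cons_val_two, Matrix.tail_cons, Matrix.cons_val_three] at hg
    have k0 := congrArg (fun y => b.repr y 0) hg
    have k1 := congrArg (fun y => b.repr y 1) hg
    have k2 := congrArg (fun y => b.repr y 2) hg
    have k3 := congrArg (fun y => b.repr y 3) hg
    simp [Finsupp.single_apply] at k0 k1 k2 k3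
    intro i; fin_cases i
    · exact k0
    · exact k1
    · exact k3
    · exact k2
  have hset4 : ({b 0, b 1, b 3, b 2 + b 5} : Set L)
      = Set.range ![b 0, b 1, b 3, b 2 + b 5] := by
    ext x
    simp [Matrix.range_cons, Matrix.range_empty]
    tauto
  refine ⟨⟨?_, ?_, ?_, ?_, ?_, ?_⟩, hCenterEq, ?_, ?_, ?_, ?_, ?_⟩
  · -- the Lie subalgebra h
    refine ⟨⟨Submodule.span ℝ ({b 0, b 1, b 3, b 2 + b 5} : Set L), ?_⟩, rfl, ?_⟩
    · intro x y hx hy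
      show ⁅x, y⁆ ∈ Submodule.span ℝ ({b 0, b 1, b 3, b 2 + b 5} : Set L)
      rw [B x y]
      refine add_mem (add_mem ?_ ?_) ?_ <;>
        exact Submodule.smul_mem _ _ (Submodule.subset_span (by simp))
    · show Module.finrank ℝ (Submodule.span ℝ ({b 0, b 1, b 3, b 2 + b 5} : Set L)) = 4
      rw [hset4, finrank_span_eq_card li4]
      simp
  · -- alternating
    intro u
    constructor <;> (simp only [nTheta1, nTheta2, wedge]; ring)
  · -- cocycle θ1
    intro u v w
    rw [B u v, B v w, B w u, hcomb1, hcomb1, hcomb1]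
    ring
  · -- cocycle θ2
    intro u v w
    rw [B u v, B v w, B w u, hcomb2, hcomb2, hcomb2]
    ring
  · -- isotropy of h
    intro u hu v hv
    obtain ⟨u4, u25⟩ := hmemS u hu
    obtain ⟨v4, v25⟩ := hmemS v hv
    constructor <;> (simp only [nTheta1, nTheta2, wedge, u4, v4, u25, v25]; ring)
  · -- joint nondegeneracy of (θ1, θ2)
    intro u H1 H2
    have E0 := H1 (b 0)
    have E2 := H1 (b 2)
    have E3 := H1 (b 3)
    have E4 := H1 (b 4)
    have E5 := H1 (b 5)
    have F1 := H2 (b 1)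
    have F3 := H2 (b 3)
    have F4 := H2 (b 4)
    have F5 := H2 (b 5)
    simp [nTheta1, nTheta2, wedge, Finsupp.single_apply] at E0 E2 E3 E4 E5 F1 F3 F4 F5
    have hz : b.repr u = 0 := by
      ext i
      fin_cases i <;> simp <;> linarith
    exact b.repr.map_eq_zero_iff.mp hz
  · -- finrank of the center
    rw [hCenterEq, hset3, finrank_span_eq_card li3]
    simp
  · -- alternating θ
    intro u
    simp only [nTheta, wedge]; ring
  · -- cocycle θ
    intro u v w
    rw [B u v, B v w, B w u, hcomb, hcomb, hcomb]
    ring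
  · -- nondegeneracy of θ
    intro u H1
    have E0 := H1 (b 0)
    have E1 := H1 (b 1)
    have E2 := H1 (b 2)
    have E3 := H1 (b 3)
    have E4 := H1 (b 4)
    have E5 := H1 (b 5)
    simp [nTheta, wedge, Finsupp.single_apply] at E0 E1 E2 E3 E4 E5
    have hz : b.repr u = 0 := by
      ext i
      fin_cases i <;> simp <;> linarith
    exact b.repr.map_eq_zero_iff.mp hz
  · -- isotropy of the center
    intro u hu v hv
    rw [hcentral] at hu hv
    obtain ⟨u2, u4, u5⟩ := hu
    obtain ⟨v2, v4, v5⟩ := hv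
    simp only [nTheta, wedge, u2, u4, u5, v2, v4, v5]
    ring
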